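/- Let n ≥ 3 and A₀, A₁, A₂ symmetric n×n matrices satisfying: there exist μ₁, μ₂ with μ₁A₁+μ₂A₂ positive definite, and there exists x⁰ with x⁰ᵀA₁x⁰=1, x⁰ᵀA₂x⁰<1. Let x* be a local non-global minimizer of xᵀA₀x over {x : xᵀA₁x = 1, xᵀA₂x ≤ 1} with multipliers α ∈ R, β > 0 satisfying (A₀+αA₁+βA₂)x* = 0 and x*ᵀA₂x* = 1. Then the matrix A₀+αA₁+βA₂ has exactly one negative eigenvalue. -/

import Mathlib

open Matrix Filter
noncomputable def quadForm {n : ℕ} (A : Matrix (Fin n) (Fin n) ℝ)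
    (x : EuclideanSpace ℝ (Fin n)) : ℝ :=
  ∑ i, ∑ j, A i j * x i * x j
lemma quadForm_eq {n : ℕ} (A : Matrix (Fin n) (Fin n) ℝ) (x : EuclideanSpace ℝ (Fin n)) :
    quadForm A x = (fun i => x i) ⬝ᵥ A.mulVec (fun i => x i) := by
  simp only [quadForm, dotProduct, mulVec, Finset.mul_sum]
  exact Finset.sum_congr rfl fun i _ => Finset.sum_congr rfl fun j _ => by ring

lemma dot_symm {n : ℕ} {M : Matrix (Fin n) (Fin n) ℝ} (hM : Mᵀ = M) (u v : Fin n → ℝ) :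
    u ⬝ᵥ M *ᵥ v = v ⬝ᵥ M *ᵥ u := by
  rw [Matrix.dotProduct_mulVec, dotProduct_comm, ← Matrix.mulVec_transpose, hM]

lemma quad_expand {n : ℕ} {M : Matrix (Fin n) (Fin n) ℝ} (hM : Mᵀ = M) (u v : Fin n → ℝ) :
    (u + v) ⬝ᵥ M *ᵥ (u + v) = u ⬝ᵥ M *ᵥ u + 2 * (u ⬝ᵥ M *ᵥ v) + v ⬝ᵥ M *ᵥ v := by
  rw [Matrix.mulVec_add, add_dotProduct]
  simp only [dotProduct_add]
  rw [dot_symm hM v u]; ring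

lemma quad_smul {n : ℕ} (M : Matrix (Fin n) (Fin n) ℝ) (a b : ℝ) (u v : Fin n → ℝ) :
    (a • u) ⬝ᵥ M *ᵥ (b • v) = a * b * (u ⬝ᵥ M *ᵥ v) := by
  rw [Matrix.mulVec_smul, smul_dotProduct, dotProduct_smul]
  simp [smul_smul]; ring

lemma cont_quad {n : ℕ} (M : Matrix (Fin n) (Fin n) ℝ) :
    Continuous fun v : Fin n → ℝ => v ⬝ᵥ M *ᵥ v := by
  simp only [dotProduct, mulVec]
  exact continuous_finset_sum _ fun i _ => (continuous_apply i).mul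
    (continuous_finset_sum _ fun j _ => continuous_const.mul (continuous_apply j))

lemma no_descent {n : ℕ} {A₀ A₁ A₂ : Matrix (Fin n) (Fin n) ℝ}
    (h0 : A₀ᵀ = A₀) (h1 : A₁ᵀ = A₁) (h2 : A₂ᵀ = A₂)
    {xs : EuclideanSpace ℝ (Fin n)}
    (hfeas1 : quadForm A₁ xs = 1) (hfeas2 : quadForm A₂ xs = 1)
    -- local minimizer
    (hloc : ∃ ε > 0, ∀ x : EuclideanSpace ℝ (Fin n),
      quadForm A₁ x = 1 → quadForm A₂ x ≤ 1 → ‖x - xs‖ < ε →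
      quadForm A₀ xs ≤ quadForm A₀ x)
    {α β : ℝ}
    (hstat : (A₀ + α • A₁ + β • A₂).mulVec (fun i => xs i) = 0)
    (u : ℝ → (Fin n → ℝ))
    (hu : Tendsto u (nhdsWithin 0 (Set.Ioi 0)) (nhds 0))
    (hcond : ∀ᶠ t in nhdsWithin 0 (Set.Ioi 0),
      0 ≤ ((fun i => xs i) + u t) ⬝ᵥ (A₁ - A₂) *ᵥ ((fun i => xs i) + u t) ∧
      (u t) ⬝ᵥ (A₀ + α • A₁ + β • A₂) *ᵥ (u t)
        + β * (((fun i => xs i) + u t) ⬝ᵥ (A₁ - A₂) *ᵥ ((fun i => xs i) + u t)) < 0) :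
    False := by
  classical
  obtain ⟨ε, hε, hmin⟩ := hloc
  set G : Matrix (Fin n) (Fin n) ℝ := A₀ + α • A₁ + β • A₂ with hGdef
  set xv : Fin n → ℝ := fun i => xs i with hxv
  have hGsym : Gᵀ = G := by
    simp [hGdef, Matrix.transpose_add, Matrix.transpose_smul, h0, h1, h2]
  have hA1xv : xv ⬝ᵥ A₁ *ᵥ xv = 1 := by rw [← quadForm_eq]; exact hfeas1
  have hA2xv : xv ⬝ᵥ A₂ *ᵥ xv = 1 := by rw [← quadForm_eq]; exact hfeas2
  -- D
  set D : (Fin n → ℝ) → ℝ := fun w => (xv + w) ⬝ᵥ A₁ *ᵥ (xv + w) with hDdef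
  have hDcont : Continuous D := (cont_quad A₁).comp (continuous_const.add continuous_id)
  have hD0 : D 0 = 1 := by simp [hDdef, hA1xv]
  have hDtend : Tendsto (fun t => D (u t)) (nhdsWithin 0 (Set.Ioi 0)) (nhds 1) := by
    have := (hDcont.tendsto 0).comp hu
    rwa [hD0] at this
  have hDpos : ∀ᶠ t in nhdsWithin 0 (Set.Ioi 0), 0 < D (u t) :=
    hDtend.eventually (eventually_gt_nhds one_pos)
  -- the curve
  set e := (EuclideanSpace.equiv (Fin n) ℝ).symm with he
  set x : ℝ → EuclideanSpace ℝ (Fin n) :=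
    fun t => (Real.sqrt (D (u t)))⁻¹ • (xs + e (u t)) with hxdef
  have hxtend : Tendsto x (nhdsWithin 0 (Set.Ioi 0)) (nhds xs) := by
    have hc : Tendsto (fun t => (Real.sqrt (D (u t)))⁻¹) (nhdsWithin 0 (Set.Ioi 0)) (nhds 1) := by
      have := (Real.continuous_sqrt.tendsto 1).comp hDtend
      simp only [Real.sqrt_one] at this
      simpa using this.inv₀ one_ne_zero
    have hz : Tendsto (fun t => xs + e (u t)) (nhdsWithin 0 (Set.Ioi 0)) (nhds xs) := by
      have := ((EuclideanSpace.equiv (Fin n) ℝ).symm.continuous.tendsto 0).comp hu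
      have h2 := tendsto_const_nhds (x := xs) (f := nhdsWithin (0:ℝ) (Set.Ioi 0)) |>.add this
      simpa [he] using h2
    have := hc.smul hz
    simpa only [one_smul] using this
  have hxnear : ∀ᶠ t in nhdsWithin 0 (Set.Ioi 0), ‖x t - xs‖ < ε := by
    have := Metric.tendsto_nhds.mp hxtend ε hε
    filter_upwards [this] with t ht
    rwa [dist_eq_norm] at ht
  -- combine and pick t
  obtain ⟨t, ⟨hh, hneg⟩, hDp, hnear⟩ := (hcond.and (hDpos.and hxnear)).exists
  set w : Fin n → ℝ := u t with hw
  set z : Fin n → ℝ := xv + w with hz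
  set c : ℝ := Real.sqrt (D w) with hc
  have cpos : 0 < c := Real.sqrt_pos.mpr hDp
  have c2 : c * c = D w := Real.mul_self_sqrt hDp.le
  have hcrfl : (fun i => x t i) = c⁻¹ • z := rfl
  set k : ℝ := c⁻¹ * c⁻¹ with hk
  have hkpos : 0 < k := mul_pos (inv_pos.mpr cpos) (inv_pos.mpr cpos)
  have hkD : k * D w = 1 := by
    rw [hk, ← c2]; field_simp
  -- basic scalar quantities
  have hveq : z ⬝ᵥ (A₁ - A₂) *ᵥ z = D w - z ⬝ᵥ A₂ *ᵥ z := by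
    rw [Matrix.sub_mulVec, dotProduct_sub, hDdef]
  have hzGz : z ⬝ᵥ G *ᵥ z = w ⬝ᵥ G *ᵥ w := by
    rw [hz, quad_expand hGsym xv w]
    have h1 : xv ⬝ᵥ G *ᵥ xv = 0 := by rw [hstat]; simp
    have h2 : xv ⬝ᵥ G *ᵥ w = 0 := by
      rw [dot_symm hGsym, hstat]; simp
    rw [h1, h2]; ring
  have hGexp : ∀ v : Fin n → ℝ, v ⬝ᵥ G *ᵥ v
      = v ⬝ᵥ A₀ *ᵥ v + α * (v ⬝ᵥ A₁ *ᵥ v) + β * (v ⬝ᵥ A₂ *ᵥ v) := by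
    intro v
    simp [hGdef, Matrix.add_mulVec, Matrix.smul_mulVec, dotProduct_add,
      dotProduct_smul, smul_eq_mul]
  have hzA0 : z ⬝ᵥ A₀ *ᵥ z
      = w ⬝ᵥ G *ᵥ w - α * (D w) - β * (z ⬝ᵥ A₂ *ᵥ z) := by
    have := hGexp z
    rw [hzGz] at this
    have hDz : z ⬝ᵥ A₁ *ᵥ z = D w := rfl
    linarith [this, hDz]
  have hxsA0 : quadForm A₀ xs = -α - β := by
    rw [quadForm_eq]
    have := hGexp xv
    have h1 : xv ⬝ᵥ G *ᵥ xv = 0 := by rw [hstat]; simp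
    rw [h1, hA1xv, hA2xv] at this
    linarith
  -- quadForm values at x t
  have hq1 : quadForm A₁ (x t) = 1 := by
    rw [quadForm_eq, hcrfl, quad_smul]
    have : z ⬝ᵥ A₁ *ᵥ z = D w := rfl
    rw [this, ← hk, hkD]
  have hq2 : quadForm A₂ (x t) ≤ 1 := by
    rw [quadForm_eq, hcrfl, quad_smul, ← hk]
    rw [hveq] at hh
    nlinarith [hkpos, hkD]
  have hq0 : quadForm A₀ (x t) < quadForm A₀ xs := by
    rw [quadForm_eq, hcrfl, quad_smul, ← hk, hzA0, hxsA0]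
    rw [hveq] at hneg
    have F := mul_neg_of_pos_of_neg hkpos hneg
    have key : k * (w ⬝ᵥ G *ᵥ w - α * D w - β * (z ⬝ᵥ A₂ *ᵥ z))
        = k * (w ⬝ᵥ G *ᵥ w + β * (D w - z ⬝ᵥ A₂ *ᵥ z)) - α * (k * D w) - β * (k * D w) := by
      ring
    rw [key, hkD]
    linarith
  exact absurd (hmin (x t) hq1 hq2 hnear) (not_le.mpr hq0)

set_option maxHeartbeats 2000000 in
theorem stmt14 {n : ℕ} (hn : 3 ≤ n) (A₀ A₁ A₂ : Matrix (Fin n) (Fin n) ℝ)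
    (h0 : A₀ᵀ = A₀) (h1 : A₁ᵀ = A₁) (h2 : A₂ᵀ = A₂)
    (hC1 : ∃ μ₁ μ₂ : ℝ, ∀ x : Fin n → ℝ, x ≠ 0 → 0 < x ⬝ᵥ (μ₁ • A₁ + μ₂ • A₂).mulVec x)
    (hC2 : ∃ x0 : Fin n → ℝ, x0 ⬝ᵥ A₁.mulVec x0 = 1 ∧ x0 ⬝ᵥ A₂.mulVec x0 < 1)
    (xs : EuclideanSpace ℝ (Fin n))
    (hfeas1 : quadForm A₁ xs = 1) (hfeas2 : quadForm A₂ xs = 1)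
    -- local minimizer
    (hloc : ∃ ε > 0, ∀ x : EuclideanSpace ℝ (Fin n),
      quadForm A₁ x = 1 → quadForm A₂ x ≤ 1 → ‖x - xs‖ < ε →
      quadForm A₀ xs ≤ quadForm A₀ x)
    -- but not a global minimizer
    (hnotglob : ∃ x : EuclideanSpace ℝ (Fin n),
      quadForm A₁ x = 1 ∧ quadForm A₂ x ≤ 1 ∧ quadForm A₀ x < quadForm A₀ xs)
    (α β : ℝ) (hβ : 0 < β)
    (hstat : (A₀ + α • A₁ + β • A₂).mulVec (fun i => xs i) = 0)
    (hG : (A₀ + α • A₁ + β • A₂).IsHermitian) :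
    (Finset.univ.filter fun i => hG.eigenvalues i < 0).card = 1 := by
  classical
  obtain ⟨y, hy1, hy2, hy0⟩ := hnotglob
  set G : Matrix (Fin n) (Fin n) ℝ := A₀ + α • A₁ + β • A₂ with hGdef
  set xv : Fin n → ℝ := fun i => xs i with hxv
  set yv : Fin n → ℝ := fun i => y i with hyv
  have hGsym : Gᵀ = G := by
    simp [hGdef, Matrix.transpose_add, Matrix.transpose_smul, h0, h1, h2]
  have hA1xv : xv ⬝ᵥ A₁ *ᵥ xv = 1 := by rw [← quadForm_eq]; exact hfeas1
  have hA2xv : xv ⬝ᵥ A₂ *ᵥ xv = 1 := by rw [← quadForm_eq]; exact hfeas2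
  have hGexp : ∀ v : Fin n → ℝ, v ⬝ᵥ G *ᵥ v
      = v ⬝ᵥ A₀ *ᵥ v + α * (v ⬝ᵥ A₁ *ᵥ v) + β * (v ⬝ᵥ A₂ *ᵥ v) := by
    intro v
    simp [hGdef, Matrix.add_mulVec, Matrix.smul_mulVec, dotProduct_add,
      dotProduct_smul, smul_eq_mul]
  have hy1' : yv ⬝ᵥ A₁ *ᵥ yv = 1 := by rw [← quadForm_eq]; exact hy1
  have hy2' : yv ⬝ᵥ A₂ *ᵥ yv ≤ 1 := by rw [← quadForm_eq]; exact hy2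
  have hxvG : xv ⬝ᵥ G *ᵥ xv = 0 := by rw [hstat]; simp
  have hyG : yv ⬝ᵥ G *ᵥ yv + β * (1 - yv ⬝ᵥ A₂ *ᵥ yv) < 0 := by
    have e1 := hGexp yv
    have e2 := hGexp xv
    rw [quadForm_eq] at hy0
    rw [quadForm_eq (x := xs)] at hy0
    rw [hy1'] at e1
    rw [hA1xv, hA2xv, hxvG] at e2
    linarith
  have hq_y : 0 ≤ 1 - yv ⬝ᵥ A₂ *ᵥ yv := by linarith
  have hyGneg : yv ⬝ᵥ G *ᵥ yv < 0 := by nlinarith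
  -- at least one negative eigenvalue
  have hex : ∃ i, hG.eigenvalues i < 0 := by
    by_contra hno
    push_neg at hno
    have hpsd : G.PosSemidef := hG.posSemidef_iff_eigenvalues_nonneg.mpr (fun i => hno i)
    have hge := hpsd.dotProduct_mulVec_nonneg yv
    simp only [star_trivial] at hge
    exact absurd hge (not_le.mpr hyGneg)
  -- uniqueness
  have huniq : ∀ i j, hG.eigenvalues i < 0 → hG.eigenvalues j < 0 → i = j := by
    intro i j hi hj
    by_contra hij
    set M : Matrix (Fin n) (Fin n) ℝ := A₁ - A₂ with hM
    have hMsym : Mᵀ = M := by simp [hM, Matrix.transpose_sub, h1, h2]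
    set v : Fin n → ℝ := M *ᵥ xv with hv
    have hMxx : xv ⬝ᵥ M *ᵥ xv = 0 := by
      rw [hM, Matrix.sub_mulVec, dotProduct_sub, hA1xv, hA2xv]; ring
    have hℓ : ∀ w : Fin n → ℝ, xv ⬝ᵥ M *ᵥ w = v ⬝ᵥ w := by
      intro w
      rw [dot_symm hMsym, hv, dotProduct_comm]
    by_cases hv0 : v = 0
    · -- degenerate case: use the global improvement direction
      refine no_descent h0 h1 h2 hfeas1 hfeas2 hloc hstat (fun t => t • yv) ?_ ?_
      · have := ((continuous_id.smul continuous_const : Continuous fun t : ℝ => t • yv).tendsto 0).mono_left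
          (nhdsWithin_le_nhds (s := Set.Ioi (0:ℝ)))
        have h' : Tendsto (fun t : ℝ => t • yv) _ (nhds ((0:ℝ) • yv)) := this
        rwa [zero_smul] at h'
      · filter_upwards [self_mem_nhdsWithin] with t ht
        have hqy : yv ⬝ᵥ M *ᵥ yv = 1 - yv ⬝ᵥ A₂ *ᵥ yv := by
          rw [hM, Matrix.sub_mulVec, dotProduct_sub, hy1']
        have hexp : (xv + t • yv) ⬝ᵥ M *ᵥ (xv + t • yv) = t * t * (1 - yv ⬝ᵥ A₂ *ᵥ yv) := by
          rw [quad_expand hMsym, hMxx, hℓ, hv0, quad_smul, hqy]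
          simp
        have hgg : (t • yv) ⬝ᵥ G *ᵥ (t • yv) = t * t * (yv ⬝ᵥ G *ᵥ yv) := quad_smul _ _ _ _ _
        rw [Set.mem_Ioi] at ht
        rw [hM] at hexp
        constructor
        · show 0 ≤ ((xv + t • yv) ⬝ᵥ (A₁ - A₂) *ᵥ (xv + t • yv))
          rw [hexp]
          exact mul_nonneg (mul_self_nonneg t) hq_y
        · show (t • yv) ⬝ᵥ G *ᵥ (t • yv)
            + β * ((xv + t • yv) ⬝ᵥ (A₁ - A₂) *ᵥ (xv + t • yv)) < 0
          rw [hexp, hgg]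
          have heq : t * t * (yv ⬝ᵥ G *ᵥ yv) + β * (t * t * (1 - yv ⬝ᵥ A₂ *ᵥ yv))
              = t * t * (yv ⬝ᵥ G *ᵥ yv + β * (1 - yv ⬝ᵥ A₂ *ᵥ yv)) := by ring
          rw [heq]
          exact mul_neg_of_pos_of_neg (mul_pos ht ht) hyG
    · -- nondegenerate case
      have hLpos : 0 < v ⬝ᵥ v := by
        have hne : v ⬝ᵥ v ≠ 0 := (dotProduct_self_eq_zero).not.mpr hv0
        exact (Finset.sum_nonneg fun k _ => mul_self_nonneg _).lt_of_ne (Ne.symm hne)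
      set ei : Fin n → ℝ := fun k => hG.eigenvectorBasis i k with hei
      set ej : Fin n → ℝ := fun k => hG.eigenvectorBasis j k with hej
      have hGei : G *ᵥ ei = hG.eigenvalues i • ei := hG.mulVec_eigenvectorBasis i
      have hGej : G *ᵥ ej = hG.eigenvalues j • ej := hG.mulVec_eigenvectorBasis j
      clear hei hej
      have hii : ei ⬝ᵥ ei = 1 := by
        have h := hG.eigenvectorBasis.orthonormal.1 i
        have h' : (inner ℝ (hG.eigenvectorBasis i) (hG.eigenvectorBasis i) : ℝ) = 1 := by
          rw [real_inner_self_eq_norm_sq, h]; norm_num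
        rw [← h']
        simp only [PiLp.inner_apply, dotProduct, RCLike.inner_apply, conj_trivial]
        exact Finset.sum_congr rfl fun k _ => mul_comm _ _
      have hjj : ej ⬝ᵥ ej = 1 := by
        have h := hG.eigenvectorBasis.orthonormal.1 j
        have h' : (inner ℝ (hG.eigenvectorBasis j) (hG.eigenvectorBasis j) : ℝ) = 1 := by
          rw [real_inner_self_eq_norm_sq, h]; norm_num
        rw [← h']
        simp only [PiLp.inner_apply, dotProduct, RCLike.inner_apply, conj_trivial]
        exact Finset.sum_congr rfl fun k _ => mul_comm _ _
      have hijd : ei ⬝ᵥ ej = 0 := by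
        have h' : (inner ℝ (hG.eigenvectorBasis i) (hG.eigenvectorBasis j) : ℝ) = 0 :=
          hG.eigenvectorBasis.orthonormal.2 hij
        rw [← h']
        simp only [PiLp.inner_apply, dotProduct, RCLike.inner_apply, conj_trivial]
        exact Finset.sum_congr rfl fun k _ => mul_comm _ _
      have hjid : ej ⬝ᵥ ei = 0 := by rw [dotProduct_comm]; exact hijd
      set li : ℝ := hG.eigenvalues i with hli
      set lj : ℝ := hG.eigenvalues j with hlj
      clear_value li lj
      clear_value ei ej
      set a : ℝ := v ⬝ᵥ ei with ha
      set b : ℝ := v ⬝ᵥ ej with hb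
      set w₀ : Fin n → ℝ := if a = 0 ∧ b = 0 then ei else b • ei + (-a) • ej with hw₀
      have hvw₀ : v ⬝ᵥ w₀ = 0 := by
        rw [hw₀]; split_ifs with hcase
        · exact hcase.1
        · rw [dotProduct_add, dotProduct_smul, dotProduct_smul, ← ha, ← hb]
          simp only [smul_eq_mul]; ring
      have hgw0 : w₀ ⬝ᵥ G *ᵥ w₀ < 0 := by
        rw [hw₀]; split_ifs with hcase
        · rw [hGei, dotProduct_smul, hii]; simpa using hi
        · have hGw : G *ᵥ (b • ei + (-a) • ej)
              = b • (li • ei) + (-a) • (lj • ej) := by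
            rw [Matrix.mulVec_add, Matrix.mulVec_smul, Matrix.mulVec_smul, hGei, hGej]
          rw [hGw]
          have hval : (b • ei + (-a) • ej) ⬝ᵥ (b • (li • ei) + (-a) • (lj • ej))
              = b * b * li + a * a * lj := by
            simp only [add_dotProduct, dotProduct_add, smul_dotProduct,
              dotProduct_smul, smul_eq_mul, hii, hjj, hijd, hjid]
            ring
          rw [hval]
          rcases eq_or_ne a 0 with ha0 | ha0
          · have hb0 : b ≠ 0 := fun hb0 => hcase ⟨ha0, hb0⟩
            have p1 : b * b * li < 0 := mul_neg_of_pos_of_neg (mul_self_pos.mpr hb0) hi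
            have p2 : a * a * lj ≤ 0 :=
              mul_nonpos_of_nonneg_of_nonpos (mul_self_nonneg a) hj.le
            linarith
          · have p1 : a * a * lj < 0 := mul_neg_of_pos_of_neg (mul_self_pos.mpr ha0) hj
            have p2 : b * b * li ≤ 0 :=
              mul_nonpos_of_nonneg_of_nonpos (mul_self_nonneg b) hi.le
            linarith
      set L : ℝ := v ⬝ᵥ v with hL
      set q0 : ℝ := w₀ ⬝ᵥ M *ᵥ w₀ with hq0
      set Bc : ℝ := w₀ ⬝ᵥ M *ᵥ v with hBc
      set qd : ℝ := v ⬝ᵥ M *ᵥ v with hqd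
      set gw : ℝ := w₀ ⬝ᵥ G *ᵥ w₀ with hgwd
      set g1 : ℝ := w₀ ⬝ᵥ G *ᵥ v with hg1
      set g2 : ℝ := v ⬝ᵥ G *ᵥ v with hg2
      set K : ℝ := (|q0| + 1) / L with hKdef
      have hKpos : 0 < K := div_pos (by positivity) hLpos
      have hKL : K * L = |q0| + 1 := div_mul_cancel₀ _ (ne_of_gt hLpos)
      have hexp2 : ∀ t s : ℝ, (xv + (t • w₀ + s • v)) ⬝ᵥ M *ᵥ (xv + (t • w₀ + s • v))
          = 2 * (s * L) + (t * t * q0 + 2 * (t * s * Bc) + s * s * qd) := by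
        intro t s
        rw [quad_expand hMsym, hMxx, hℓ, quad_expand hMsym (t • w₀) (s • v),
          quad_smul, quad_smul, quad_smul,
          dotProduct_add, dotProduct_smul, dotProduct_smul, hvw₀]
        simp only [smul_eq_mul, ← hL, ← hq0, ← hBc, ← hqd]
        ring
      have hgexp2 : ∀ t s : ℝ, (t • w₀ + s • v) ⬝ᵥ G *ᵥ (t • w₀ + s • v)
          = t * t * gw + 2 * (t * s * g1) + s * s * g2 := by
        intro t s
        rw [quad_expand hGsym, quad_smul, quad_smul, quad_smul]
      clear_value L q0 Bc qd gw g1 g2 K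
      have hden1 : 0 < 2*K*|Bc| + K*K*|qd| + 1 := by
        have e1 : 0 ≤ 2*K*|Bc| := mul_nonneg (by linarith) (abs_nonneg _)
        have e2 : 0 ≤ K*K*|qd| := mul_nonneg (mul_nonneg hKpos.le hKpos.le) (abs_nonneg _)
        linarith
      have hden2 : 0 < 2*K*|g1| + K*K*|g2| + 1 := by
        have e1 : 0 ≤ 2*K*|g1| := mul_nonneg (by linarith) (abs_nonneg _)
        have e2 : 0 ≤ K*K*|g2| := mul_nonneg (mul_nonneg hKpos.le hKpos.le) (abs_nonneg _)
        linarith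
      set t₁ : ℝ := min 1 (min (1 / (2*K*|Bc| + K*K*|qd| + 1))
        ((-gw) / (2*K*|g1| + K*K*|g2| + 1))) with ht₁def
      have ht₁pos : 0 < t₁ := by
        refine lt_min one_pos (lt_min (div_pos one_pos hden1) ?_)
        exact div_pos (by linarith) hden2
      have hIVT : ∀ t : ℝ, 0 < t → t ≤ t₁ → ∃ s : ℝ, |s| ≤ K * (t*t) ∧
          2 * (s * L) + (t * t * q0 + 2 * (t * s * Bc) + s * s * qd) = 0 := by
        intro t ht0 htt
        have ht1 : t ≤ 1 := le_trans htt (min_le_left _ _)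
        have ht3 : (0:ℝ) ≤ t*t*t := mul_nonneg (mul_self_nonneg t) ht0.le
        have ht4 : (0:ℝ) ≤ t*t*t*t := mul_nonneg ht3 ht0.le
        have htB : t * (2*K*|Bc| + K*K*|qd| + 1) ≤ 1 := by
          have h' := le_trans htt (le_trans (min_le_right _ _) (min_le_left _ _))
          rw [le_div_iff₀ hden1] at h'
          linarith
        have hf4 : t*t*t*t ≤ t*t*t := by
          simpa using mul_le_mul_of_nonneg_left ht1 ht3
        have hKB : (0:ℝ) ≤ 2*K*(t*t*t) := mul_nonneg (by linarith) ht3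
        have hKq : (0:ℝ) ≤ K*K*(t*t*t*t) := mul_nonneg (mul_nonneg hKpos.le hKpos.le) ht4
        have hfB : (2*K*(t*t*t)) * (-|Bc|) ≤ (2*K*(t*t*t)) * Bc :=
          mul_le_mul_of_nonneg_left (neg_abs_le Bc) hKB
        have hfB' : (2*K*(t*t*t)) * Bc ≤ (2*K*(t*t*t)) * |Bc| :=
          mul_le_mul_of_nonneg_left (le_abs_self Bc) hKB
        have hfq : (K*K*(t*t*t*t)) * (-|qd|) ≤ (K*K*(t*t*t*t)) * qd :=
          mul_le_mul_of_nonneg_left (neg_abs_le qd) hKq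
        have hfq' : (K*K*(t*t*t*t)) * qd ≤ (K*K*(t*t*t*t)) * |qd| :=
          mul_le_mul_of_nonneg_left (le_abs_self qd) hKq
        have hf3 : t*t*(-|q0|) ≤ t*t*q0 :=
          mul_le_mul_of_nonneg_left (neg_abs_le q0) (mul_self_nonneg t)
        have he1 : t*t*(t*(2*K*|Bc| + K*K*|qd| + 1)) ≤ t*t*1 :=
          mul_le_mul_of_nonneg_left htB (mul_self_nonneg t)
        have hf5 : (K*K*|qd|)*(t*t*t*t) ≤ (K*K*|qd|)*(t*t*t) :=
          mul_le_mul_of_nonneg_left hf4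
            (mul_nonneg (mul_nonneg hKpos.le hKpos.le) (abs_nonneg _))
        have hKL2 : t*t*(K*L) = t*t*(|q0| + 1) := by rw [hKL]
        have hposa : (0:ℝ) ≤ t*t*t := ht3
        have hposb : (0:ℝ) ≤ t*t*|q0| := mul_nonneg (mul_self_nonneg t) (abs_nonneg _)
        have hf3' : t*t*q0 ≤ t*t*|q0| :=
          mul_le_mul_of_nonneg_left (le_abs_self q0) (mul_self_nonneg t)
        have hplus : 0 ≤ 2 * ((K*(t*t)) * L)
            + (t * t * q0 + 2 * (t * (K*(t*t)) * Bc) + (K*(t*t)) * (K*(t*t)) * qd) := by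
          linarith [hKL2, hf3, hfB, hfq, he1, hf5, hposa, hposb]
        have hminus : 2 * ((-(K*(t*t))) * L)
            + (t * t * q0 + 2 * (t * (-(K*(t*t))) * Bc) + (-(K*(t*t))) * (-(K*(t*t))) * qd) ≤ 0 := by
          linarith [hKL2, hf3', hfB, hfq', he1, hf5, hposa, hposb]
        have hcont : ContinuousOn
            (fun s : ℝ => 2 * (s * L) + (t * t * q0 + 2 * (t * s * Bc) + s * s * qd))
            (Set.Icc (-(K*(t*t))) (K*(t*t))) := by
          apply Continuous.continuousOn
          have c1 : Continuous fun s : ℝ => 2 * (s * L) :=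
            continuous_const.mul (continuous_id.mul continuous_const)
          have c2 : Continuous fun s : ℝ => 2 * (t * s * Bc) :=
            continuous_const.mul ((continuous_const.mul continuous_id).mul continuous_const)
          have c3 : Continuous fun s : ℝ => s * s * qd :=
            (continuous_id.mul continuous_id).mul continuous_const
          exact c1.add ((continuous_const.add c2).add c3)
        have hKt : -(K*(t*t)) ≤ K*(t*t) := by
          have : (0:ℝ) ≤ K*(t*t) := mul_nonneg hKpos.le (mul_self_nonneg t)
          linarith
        have hsub := intermediate_value_Icc hKt hcont
        have h0mem : (0:ℝ) ∈ Set.Icc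
            (2 * ((-(K*(t*t))) * L) + (t * t * q0 + 2 * (t * (-(K*(t*t))) * Bc)
              + (-(K*(t*t))) * (-(K*(t*t))) * qd))
            (2 * ((K*(t*t)) * L) + (t * t * q0 + 2 * (t * (K*(t*t)) * Bc)
              + (K*(t*t)) * (K*(t*t)) * qd)) := ⟨hminus, hplus⟩
        obtain ⟨s, hsmem, hs0⟩ := hsub h0mem
        exact ⟨s, abs_le.mpr ⟨hsmem.1, hsmem.2⟩, hs0⟩
      set sfun : ℝ → ℝ := fun t =>
        if hEx : ∃ s : ℝ, |s| ≤ K * (t*t) ∧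
            2 * (s * L) + (t * t * q0 + 2 * (t * s * Bc) + s * s * qd) = 0
        then hEx.choose else 0 with hsfun
      have hsprop : ∀ t : ℝ, 0 < t → t ≤ t₁ → |sfun t| ≤ K * (t*t) ∧
          2 * ((sfun t) * L) + (t * t * q0 + 2 * (t * (sfun t) * Bc)
            + (sfun t) * (sfun t) * qd) = 0 := by
        intro t ht0 htt
        have hEx := hIVT t ht0 htt
        rw [hsfun]
        simp only [dif_pos hEx]
        exact hEx.choose_spec
      have hmemIoo : Set.Ioo (0:ℝ) t₁ ∈ nhdsWithin (0:ℝ) (Set.Ioi 0) :=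
        Ioo_mem_nhdsGT ht₁pos
      refine no_descent h0 h1 h2 hfeas1 hfeas2 hloc hstat
        (fun t => t • w₀ + (sfun t) • v) ?_ ?_
      · have hsf0 : Tendsto sfun (nhdsWithin 0 (Set.Ioi 0)) (nhds 0) := by
          apply squeeze_zero_norm' (a := fun t : ℝ => K * (t*t))
          · filter_upwards [hmemIoo] with t ht
            rw [Real.norm_eq_abs]
            exact (hsprop t ht.1 ht.2.le).1
          · have hc : Tendsto (fun t : ℝ => K * (t*t)) (nhds 0) (nhds (K*((0:ℝ)*0))) :=
              (continuous_const.mul (continuous_id.mul continuous_id)).tendsto 0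
            simpa using hc.mono_left nhdsWithin_le_nhds
        have h1t : Tendsto (fun t : ℝ => t • w₀) (nhdsWithin 0 (Set.Ioi 0)) (nhds 0) := by
          have hc := ((continuous_id.smul continuous_const : Continuous fun t : ℝ => t • w₀).tendsto 0).mono_left
            (nhdsWithin_le_nhds (s := Set.Ioi (0:ℝ)))
          have h' : Tendsto (fun t : ℝ => t • w₀) _ (nhds ((0:ℝ) • w₀)) := hc
          rwa [zero_smul] at h'
        have h2t : Tendsto (fun t : ℝ => sfun t • v) (nhdsWithin 0 (Set.Ioi 0)) (nhds 0) := by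
          have hc := hsf0.smul_const v
          simpa using hc
        have hc := h1t.add h2t
        simpa using hc
      · filter_upwards [hmemIoo] with t ht
        obtain ⟨hsb, hszero⟩ := hsprop t ht.1 ht.2.le
        have ht0 : 0 < t := ht.1
        have ht1 : t ≤ 1 := le_trans ht.2.le (min_le_left _ _)
        constructor
        · show 0 ≤ (xv + (t • w₀ + sfun t • v)) ⬝ᵥ M *ᵥ (xv + (t • w₀ + sfun t • v))
          rw [hexp2 t (sfun t), hszero]
        · show (t • w₀ + sfun t • v) ⬝ᵥ G *ᵥ (t • w₀ + sfun t • v)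
            + β * ((xv + (t • w₀ + sfun t • v)) ⬝ᵥ M *ᵥ (xv + (t • w₀ + sfun t • v))) < 0
          rw [hexp2 t (sfun t), hszero, hgexp2 t (sfun t), mul_zero, add_zero]
          set s : ℝ := sfun t with hs
          have htg : t * (2*K*|g1| + K*K*|g2| + 1) ≤ -gw := by
            have h' := le_trans ht.2.le (le_trans (min_le_right _ _) (min_le_right _ _))
            rw [le_div_iff₀ hden2] at h'
            linarith
          have hss : s * s ≤ (K*(t*t)) * (K*(t*t)) := by
            have := mul_self_le_mul_self (abs_nonneg s) hsb
            rwa [abs_mul_abs_self] at this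
          have hc1 : s * g1 ≤ (K*(t*t)) * |g1| := by
            calc s * g1 ≤ |s * g1| := le_abs_self _
            _ = |s| * |g1| := abs_mul _ _
            _ ≤ (K*(t*t)) * |g1| := mul_le_mul_of_nonneg_right hsb (abs_nonneg _)
          have hc1' : 2 * (t * (s * g1)) ≤ 2 * (t * ((K*(t*t)) * |g1|)) := by
            have := mul_le_mul_of_nonneg_left hc1 ht0.le
            linarith
          have hc2 : s * s * g2 ≤ ((K*(t*t)) * (K*(t*t))) * |g2| := by
            calc s * s * g2 ≤ s * s * |g2| :=
              mul_le_mul_of_nonneg_left (le_abs_self g2) (mul_self_nonneg s)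
            _ ≤ ((K*(t*t)) * (K*(t*t))) * |g2| :=
              mul_le_mul_of_nonneg_right hss (abs_nonneg _)
          have ht3 : (0:ℝ) ≤ t*t*t := mul_nonneg (mul_self_nonneg t) ht0.le
          have hf4 : t*t*t*t ≤ t*t*t := by
            simpa using mul_le_mul_of_nonneg_left ht1 ht3
          have hf5 : (K*K*|g2|)*(t*t*t*t) ≤ (K*K*|g2|)*(t*t*t) :=
            mul_le_mul_of_nonneg_left hf4
              (mul_nonneg (mul_nonneg hKpos.le hKpos.le) (abs_nonneg _))
          have he2 : t*t*(t*(2*K*|g1| + K*K*|g2| + 1)) ≤ t*t*(-gw) :=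
            mul_le_mul_of_nonneg_left htg (mul_self_nonneg t)
          have hposc : (0:ℝ) < t*t*t := mul_pos (mul_pos ht0 ht0) ht0
          linarith [hc1', hc2, hf5, he2, hposc]
  obtain ⟨i₀, hi₀⟩ := hex
  rw [Finset.card_eq_one]
  refine ⟨i₀, ?_⟩
  ext j
  simp only [Finset.mem_filter, Finset.mem_univ, true_and, Finset.mem_singleton]
  exact ⟨fun hj => huniq j i₀ hj hi₀, fun h => h ▸ hi₀⟩
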